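/- Let p be an odd prime, let E : y² = x³ + Ax + B be an elliptic curve over F_p, let α ∈ F_p be a quadratic non-residue, and let E^t : y² = x³ + α⁻²Ax + α⁻³B be the quadratic twist of E. Then #E(F_p) + #E^t(F_p) = 2p + 2. -/

import Mathlib

/-- The short Weierstrass curve `y² = x³ + Ax + B` over a field `F`. -/
def shortWeierstrass (F : Type) [Field F] (A B : F) : WeierstrassCurve.Affine F :=
  { a₁ := 0, a₂ := 0, a₃ := 0, a₄ := A, a₆ := B }

open WeierstrassCurve WeierstrassCurve.Affine Finset

variable {F : Type} [Field F] [Fintype F] [DecidableEq F]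

/-- `Point` is the point at infinity plus the nonsingular affine points. -/
noncomputable def myPointEquiv (W : WeierstrassCurve.Affine F) :
    W.Point ≃ Option {P : F × F // W.Nonsingular P.1 P.2} where
  toFun P := match P with
    | .zero => none
    | @Point.some _ _ _ x y h => some ⟨(x, y), h⟩
  invFun o := match o with
    | none => .zero
    | some ⟨(_, _), h⟩ => .some _ _ h
  left_inv P := by cases P <;> rfl
  right_inv o := by rcases o with _ | ⟨⟨x, y⟩, h⟩ <;> rfl

lemma card_point (A B : F) (hΔ : (shortWeierstrass F A B).Δ ≠ 0) :
    Nat.card (shortWeierstrass F A B).Point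
      = 1 + Nat.card {P : F × F // P.2 ^ 2 = P.1 ^ 3 + A * P.1 + B} := by
  have he : ∀ x y : F, (shortWeierstrass F A B).Nonsingular x y ↔ y ^ 2 = x ^ 3 + A * x + B := by
    intro x y
    constructor
    · intro h
      have := ((shortWeierstrass F A B).nonsingular_iff' x y).mp h |>.1
      rw [equation_iff] at this
      simpa [shortWeierstrass] using this
    · intro h
      refine ((shortWeierstrass F A B).equation_iff_nonsingular_of_Δ_ne_zero hΔ).mp ?_
      rw [equation_iff]
      simpa [shortWeierstrass] using h
  rw [Nat.card_congr ((myPointEquiv _).trans (Equiv.optionCongr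
    (Equiv.subtypeEquivRight (p := fun P : F × F => (shortWeierstrass F A B).Nonsingular P.1 P.2)
      (q := fun P : F × F => P.2 ^ 2 = P.1 ^ 3 + A * P.1 + B) (fun P => he P.1 P.2))))]
  simp [Nat.card_eq_fintype_card, Fintype.card_option, add_comm]

lemma card_count (f : F → F) (hF : ringChar F ≠ 2) :
    (Nat.card {P : F × F // P.2 ^ 2 = f P.1} : ℤ)
      = ∑ x : F, ((quadraticChar F) (f x) + 1) := by
  rw [Nat.card_congr (Equiv.subtypeProdEquivSigmaSubtype fun x y => y ^ 2 = f x),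
    Nat.card_eq_fintype_card, Fintype.card_sigma]
  push_cast
  refine Finset.sum_congr rfl fun x _ => ?_
  rw [← quadraticChar_card_sqrts hF (f x)]
  congr 1
  rw [Set.toFinset_card]
  rfl

/-- For an odd prime `p`, an elliptic curve `E : y² = x³ + Ax + B` over `𝔽_p` and its quadratic
twist `Eᵗ : y² = x³ + α⁻²Ax + α⁻³B` by a quadratic non-residue `α`, one has
`#E(𝔽_p) + #Eᵗ(𝔽_p) = 2p + 2`. -/
theorem stmt_2 (p : ℕ) [Fact p.Prime] (hp : p ≠ 2) (A B α : ZMod p)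
    (hα : ¬ IsSquare α)
    (hΔ : (shortWeierstrass (ZMod p) A B).Δ ≠ 0) :
    Nat.card (shortWeierstrass (ZMod p) A B).Point +
      Nat.card (shortWeierstrass (ZMod p) ((α ^ 2)⁻¹ * A) ((α ^ 3)⁻¹ * B)).Point
      = 2 * p + 2 := by
  have hα0 : α ≠ 0 := fun h => hα (h ▸ ⟨0, by simp⟩)
  have hchar : ringChar (ZMod p) ≠ 2 := by
    rw [ZMod.ringChar_zmod_n]; exact hp
  -- the twist discriminant is nonzero
  have hΔ' : (shortWeierstrass (ZMod p) ((α ^ 2)⁻¹ * A) ((α ^ 3)⁻¹ * B)).Δ ≠ 0 := by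
    have : (shortWeierstrass (ZMod p) ((α ^ 2)⁻¹ * A) ((α ^ 3)⁻¹ * B)).Δ
        = (α ^ 6)⁻¹ * (shortWeierstrass (ZMod p) A B).Δ := by
      simp only [shortWeierstrass, WeierstrassCurve.Δ, WeierstrassCurve.b₂, WeierstrassCurve.b₄,
        WeierstrassCurve.b₆, WeierstrassCurve.b₈]
      field_simp
      ring
    rw [this]
    exact mul_ne_zero (inv_ne_zero (pow_ne_zero _ hα0)) hΔ
  set f : ZMod p → ZMod p := fun x => x ^ 3 + A * x + B with hf
  set g : ZMod p → ZMod p := fun x => x ^ 3 + (α ^ 2)⁻¹ * A * x + (α ^ 3)⁻¹ * B with hg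
  have hχα : (quadraticChar (ZMod p)) α⁻¹ = -1 := by
    rw [quadraticChar_neg_one_iff_not_isSquare]
    rintro ⟨b, hb⟩
    refine hα ⟨α * b, ?_⟩
    calc α = α * α * α⁻¹ := by field_simp
    _ = α * α * (b * b) := by rw [hb]
    _ = α * b * (α * b) := by ring
  have hsum : ∑ x : ZMod p, (quadraticChar (ZMod p)) (g x)
      = - ∑ x : ZMod p, (quadraticChar (ZMod p)) (f x) := by
    have step : ∀ x : ZMod p, (quadraticChar (ZMod p)) (g x)
        = - (quadraticChar (ZMod p)) (f (α * x)) := by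
      intro x
      have : g x = α⁻¹ ^ 3 * f (α * x) := by
        simp only [hf, hg]
        field_simp
      rw [this, map_mul, map_pow, hχα]
      ring
    rw [Finset.sum_congr rfl fun x _ => step x, ← Finset.sum_neg_distrib]
    exact Fintype.sum_equiv (Equiv.mulLeft₀ α hα0) _ _ fun x => rfl
  have h1 := card_point A B hΔ
  have h2 := card_point ((α ^ 2)⁻¹ * A) ((α ^ 3)⁻¹ * B) hΔ'
  have c1 := card_count f hchar
  have c2 := card_count g hchar
  have key : (Nat.card (shortWeierstrass (ZMod p) A B).Point : ℤ) +
      (Nat.card (shortWeierstrass (ZMod p) ((α ^ 2)⁻¹ * A) ((α ^ 3)⁻¹ * B)).Point : ℤ)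
      = 2 * p + 2 := by
    rw [h1, h2]
    push_cast
    rw [c1, c2]
    simp only [Finset.sum_add_distrib, Finset.sum_const, Finset.card_univ, ZMod.card, nsmul_eq_mul,
      mul_one]
    rw [hsum]
    ring
  exact_mod_cast key
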